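/- Let π_F be the projection sending each persistence diagram A to the diagram obtained by deleting its points with infinite coordinates. Then π_F is a contraction with respect to the (f,p)-Wasserstein divergence: D(π_F(A)‖π_F(B)) ≤ D(A‖B) for all diagrams A, B and all 1 ≤ p ≤ ∞. -/

import Mathlib

open Multiset
open scoped ENNReal

attribute [local instance] Classical.propDecidable

noncomputable section

/-- A point of an (extended) persistence diagram: finite birth, possibly infinite death. -/
abbrev Pt : Type := ℝ × EReal

/-- A persistence diagram: a finite multiset of points strictly above the diagonal
(the diagonal itself, with infinite multiplicity, is treated implicitly). -/
def IsPD (A : Multiset Pt) : Prop := ∀ a ∈ A, (a.1 : EReal) < a.2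

/-- Sup-norm distance between two diagram points, with the convention that two
infinite death coordinates are at distance zero from each other. -/
def dInfty (a b : Pt) : ℝ≥0∞ :=
  max (ENNReal.ofReal |a.1 - b.1|)
    (if a.2 = ⊤ ∧ b.2 = ⊤ then 0 else (a.2 - b.2).abs)

/-- Sup-norm distance from a point to its diagonal projection
`λ(x,y) = ((x+y)/2,(x+y)/2)`; it is `∞` for points with infinite death. -/
def dDiag (a : Pt) : ℝ≥0∞ :=
  if a.2 = ⊤ then ⊤ else (a.2 - (a.1 : EReal)).abs / 2

/-- A point lying on the diagonal. -/
def isDiag (a : Pt) : Prop := a.2 = (a.1 : EReal)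

/-- `M` encodes an injection from the diagram `A` into the diagram `B` augmented with
all diagonal points: every point of `A` is matched (to an off-diagonal point of `B`,
with multiplicity, or to a diagonal point). -/
def IsInjMatching (A B : Multiset Pt) (M : Multiset (Pt × Pt)) : Prop :=
  M.map Prod.fst = A ∧ (M.map Prod.snd).filter (fun b => ¬ isDiag b) ≤ B

/-- The points of `B` not in the image of the injection encoded by `M`. -/
def unmatched (B : Multiset Pt) (M : Multiset (Pt × Pt)) : Multiset Pt :=
  B - (M.map Prod.snd).filter (fun b => ¬ isDiag b)

/-- The cost of an injection: matched pairs contribute `‖a-γ(a)‖_∞^p`, unmatched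
points of `B` contribute `f(‖b-λ(b)‖_∞)^p`. -/
def injCost (f : ℝ≥0∞ → ℝ≥0∞) (p : ℝ) (B : Multiset Pt) (M : Multiset (Pt × Pt)) : ℝ≥0∞ :=
  (M.map fun q => dInfty q.1 q.2 ^ p).sum +
    ((unmatched B M).map fun b => f (dDiag b) ^ p).sum

/-- The `(f,p)`-Wasserstein divergence `D_p^f(A‖B)`. -/
def WDiv (f : ℝ≥0∞ → ℝ≥0∞) (p : ℝ) (A B : Multiset Pt) : ℝ≥0∞ :=
  (⨅ (M : Multiset (Pt × Pt)) (_ : IsInjMatching A B M), injCost f p B M) ^ (1 / p)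

/-- The `(f,∞)`-bottleneck divergence `D_∞^f(A‖B)`. -/
def WDivInf (f : ℝ≥0∞ → ℝ≥0∞) (A B : Multiset Pt) : ℝ≥0∞ :=
  ⨅ (M : Multiset (Pt × Pt)) (_ : IsInjMatching A B M),
    max ((M.map fun q => dInfty q.1 q.2).sup)
      (((unmatched B M).map fun b => f (dDiag b)).sup)

/-- `M` encodes a bijection between `A` and `B`, both augmented with all diagonal
points: the off-diagonal sources are exactly `A` and the off-diagonal targets are
exactly `B`. -/
def IsBijMatching (A B : Multiset Pt) (M : Multiset (Pt × Pt)) : Prop :=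
  (M.map Prod.fst).filter (fun a => ¬ isDiag a) = A ∧
    (M.map Prod.snd).filter (fun b => ¬ isDiag b) = B

/-- The `p`-Wasserstein distance `d_p(A,B)`. -/
def Wass (p : ℝ) (A B : Multiset Pt) : ℝ≥0∞ :=
  (⨅ (M : Multiset (Pt × Pt)) (_ : IsBijMatching A B M),
    (M.map fun q => dInfty q.1 q.2 ^ p).sum) ^ (1 / p)

/-- The bottleneck distance `d_∞(A,B)`. -/
def WassInf (A B : Multiset Pt) : ℝ≥0∞ :=
  ⨅ (M : Multiset (Pt × Pt)) (_ : IsBijMatching A B M),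
    (M.map fun q => dInfty q.1 q.2).sup

/-- `f` is sub-diagonal: `f x ≤ x`. -/
def SubDiag (f : ℝ≥0∞ → ℝ≥0∞) : Prop := ∀ x, f x ≤ x

/-- `f` is sub-additive: `f (x+y) ≤ f x + f y`. -/
def SubAdd (f : ℝ≥0∞ → ℝ≥0∞) : Prop := ∀ x y, f (x + y) ≤ f x + f y

/-- The projection `π_F` deleting the points with infinite death coordinate. -/
def piF (A : Multiset Pt) : Multiset Pt := A.filter (fun a => a.2 ≠ ⊤)

end


section Aux

attribute [local instance] Classical.propDecidable

lemma msum_mono {s t : Multiset ℝ≥0∞} (h : s ≤ t) : s.sum ≤ t.sum := by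
  obtain ⟨u, rfl⟩ := Multiset.le_iff_exists_add.mp h
  simp

lemma msup_mono {s t : Multiset ℝ≥0∞} (h : s ≤ t) : s.sup ≤ t.sup :=
  Multiset.sup_le.mpr fun _ hb => Multiset.le_sup (Multiset.mem_of_le h hb)

lemma dInfty_mixed {a b : Pt} (h : ¬ (a.2 = (⊤ : EReal) ↔ b.2 = ⊤)) : dInfty a b = ⊤ := by
  have hcond : ¬ (a.2 = (⊤ : EReal) ∧ b.2 = ⊤) := fun ⟨h1, h2⟩ => h (by simp [h1, h2])
  have habs : (a.2 - b.2).abs = ⊤ := by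
    rcases Classical.em (a.2 = ⊤) with h1 | h1
    · have h2 : b.2 ≠ ⊤ := fun h2 => h (by simp [h1, h2])
      have : a.2 - b.2 = ⊤ := by
        rw [h1, sub_eq_add_neg]; exact EReal.top_add_of_ne_bot (by simp [h2])
      simp [this]
    · have h2 : b.2 = ⊤ := by
        by_contra h2; exact h (by simp [h1, h2])
      rw [h2, sub_eq_add_neg]
      simp
  simp [dInfty, hcond, habs]

lemma filter_matching {A B : Multiset Pt} {M : Multiset (Pt × Pt)}
    (hM : IsInjMatching A B M)
    (hmix : ∀ q ∈ M, (q.1.2 = (⊤ : EReal) ↔ q.2.2 = ⊤)) :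
    IsInjMatching (piF A) (piF B) (M.filter (fun q => q.1.2 ≠ ⊤)) ∧
      M.filter (fun q => q.1.2 ≠ ⊤) ≤ M ∧
      unmatched (piF B) (M.filter (fun q => q.1.2 ≠ ⊤)) ≤ unmatched B M := by
  set M' := M.filter (fun q => q.1.2 ≠ ⊤) with hM'def
  have hfst : M'.map Prod.fst = piF A := by
    rw [hM'def]
    rw [piF, ← hM.1, Multiset.filter_map]
    exact congrArg (Multiset.map Prod.fst) (Multiset.filter_congr fun q _ => Iff.rfl)
  have hMeq : M' = M.filter (fun q => q.2.2 ≠ ⊤) := by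
    rw [hM'def]
    exact Multiset.filter_congr (fun q hq => by rw [not_iff_not]; exact hmix q hq)
  have hSeq : (M'.map Prod.snd).filter (fun b => ¬ isDiag b)
      = ((M.map Prod.snd).filter (fun b => ¬ isDiag b)).filter (fun b => b.2 ≠ ⊤) := by
    have h0 : M.filter (fun q => q.2.2 ≠ ⊤) = M.filter ((fun b : Pt => b.2 ≠ ⊤) ∘ Prod.snd) :=
      Multiset.filter_congr fun q _ => Iff.rfl
    rw [hMeq, h0, ← Multiset.filter_map, Multiset.filter_filter, Multiset.filter_filter]
    exact Multiset.filter_congr fun b _ => and_comm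
  have hsnd : (M'.map Prod.snd).filter (fun b => ¬ isDiag b) ≤ piF B := by
    rw [hSeq, piF]
    exact Multiset.filter_le_filter _ hM.2
  refine ⟨⟨hfst, hsnd⟩, Multiset.filter_le _ _, ?_⟩
  rw [unmatched, unmatched, hSeq, piF, ← Multiset.filter_sub]
  exact Multiset.filter_le _ _

end Aux

/-- The projection `π_F` deleting infinite points is a contraction for the
`(f,p)`-Wasserstein divergence, for all `1 ≤ p ≤ ∞`. -/
theorem piF_contraction_wdiv (F : ℝ≥0∞ → ℝ≥0∞) (hd : SubDiag F) (ha : SubAdd F)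
    (A B : Multiset Pt) (hA : IsPD A) (hB : IsPD B) :
    (∀ p : ℝ, 1 ≤ p → WDiv F p (piF A) (piF B) ≤ WDiv F p A B) ∧
      WDivInf F (piF A) (piF B) ≤ WDivInf F A B := by
  classical
  constructor
  · intro p hp
    have hp0 : (0 : ℝ) < p := lt_of_lt_of_le one_pos hp
    apply ENNReal.rpow_le_rpow _ (by positivity)
    refine le_iInf fun M => le_iInf fun hM => ?_
    by_cases hmix : ∀ q ∈ M, (q.1.2 = (⊤ : EReal) ↔ q.2.2 = ⊤)
    · obtain ⟨hM', hle, hunle⟩ := filter_matching hM hmix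
      refine iInf_le_of_le _ (iInf_le_of_le hM' ?_)
      unfold injCost
      exact add_le_add (msum_mono (Multiset.map_le_map hle))
        (msum_mono (Multiset.map_le_map hunle))
    · push_neg at hmix
      obtain ⟨q, hq, hne⟩ := hmix
      have hd : dInfty q.1 q.2 = ⊤ := dInfty_mixed (a := q.1) (b := q.2) (by tauto)
      have h1 : ((M.map fun q => dInfty q.1 q.2 ^ p).sum : ℝ≥0∞) = ⊤ := by
        refine top_unique ?_
        have hmem : (⊤ : ℝ≥0∞) ∈ M.map fun q => dInfty q.1 q.2 ^ p := by
          refine Multiset.mem_map.mpr ⟨q, hq, ?_⟩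
          rw [hd]; exact ENNReal.top_rpow_of_pos hp0
        exact Multiset.single_le_sum (fun x _ => _root_.zero_le) _ hmem
      have : injCost F p B M = ⊤ := by
        rw [injCost, h1, top_add]
      rw [this]
      exact le_top
  · refine le_iInf fun M => le_iInf fun hM => ?_
    by_cases hmix : ∀ q ∈ M, (q.1.2 = (⊤ : EReal) ↔ q.2.2 = ⊤)
    · obtain ⟨hM', hle, hunle⟩ := filter_matching hM hmix
      refine iInf_le_of_le _ (iInf_le_of_le hM' ?_)
      exact max_le_max (msup_mono (Multiset.map_le_map hle))
        (msup_mono (Multiset.map_le_map hunle))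
    · push_neg at hmix
      obtain ⟨q, hq, hne⟩ := hmix
      have hd : dInfty q.1 q.2 = ⊤ := dInfty_mixed (a := q.1) (b := q.2) (by tauto)
      have h1 : ((M.map fun q => dInfty q.1 q.2).sup : ℝ≥0∞) = ⊤ := by
        refine top_unique ?_
        refine Multiset.le_sup ?_
        exact Multiset.mem_map.mpr ⟨q, hq, hd⟩
      refine le_top.trans ?_
      rw [le_max_iff]
      left
      rw [h1]
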